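/- In the winner-bid auction with valuations v_l < v_h, tie-breaker favoring the high-valuation agent, the set of Nash equilibrium payoff vectors equals {(c_l + t, c_h + (ES − t)) : t = 0, 1, ..., ES}, where c_l = v_l/2, c_h = v_h/2 and ES = c_h − c_l. -/
import Mathlib


open Finset Filter

/-- Payoff to the low-valuation agent in the winner-bid auction when she bids `b`
and the high-valuation agent bids `r` (ties won by the high-valuation agent). -/
noncomputable def UlWB (vl : ℕ) (b r : ℕ) : ℝ := if r < b then (vl : ℝ) - b else (r : ℝ)

/-- Payoff to the high-valuation agent in the winner-bid auction when she bids `b`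
and the low-valuation agent bids `r` (ties won by the high-valuation agent). -/
noncomputable def UhWB (vh : ℕ) (b r : ℕ) : ℝ := if r ≤ b then (vh : ℝ) - b else (r : ℝ)

/-- A mixed strategy on the bid set `{0, ..., pbar}`. -/
def IsMixed (pbar : ℕ) (σ : ℕ → ℝ) : Prop :=
  (∀ b, 0 ≤ σ b) ∧ (∀ b, pbar < b → σ b = 0) ∧ ∑ b ∈ Finset.range (pbar + 1), σ b = 1

/-- Expected payoff for the low-valuation agent of bidding `b` against `σh`. -/
noncomputable def eUl (pbar vl : ℕ) (σh : ℕ → ℝ) (b : ℕ) : ℝ :=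
  ∑ r ∈ Finset.range (pbar + 1), σh r * UlWB vl b r

/-- Expected payoff for the high-valuation agent of bidding `b` against `σl`. -/
noncomputable def eUh (pbar vh : ℕ) (σl : ℕ → ℝ) (b : ℕ) : ℝ :=
  ∑ r ∈ Finset.range (pbar + 1), σl r * UhWB vh b r

/-- Nash equilibrium of the winner-bid auction. -/
def IsNashWB (pbar vl vh : ℕ) (σl σh : ℕ → ℝ) : Prop :=
  IsMixed pbar σl ∧ IsMixed pbar σh ∧
  (∀ b ≤ pbar, 0 < σl b → ∀ b' ≤ pbar, eUl pbar vl σh b' ≤ eUl pbar vl σh b) ∧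
  (∀ b ≤ pbar, 0 < σh b → ∀ b' ≤ pbar, eUh pbar vh σl b' ≤ eUh pbar vh σl b)

/-- Expected payoff of the low-valuation agent at a mixed profile. -/
noncomputable def piL (pbar vl : ℕ) (σl σh : ℕ → ℝ) : ℝ :=
  ∑ b ∈ Finset.range (pbar + 1), σl b * eUl pbar vl σh b

/-- Expected payoff of the high-valuation agent at a mixed profile. -/
noncomputable def piH (pbar vh : ℕ) (σl σh : ℕ → ℝ) : ℝ :=
  ∑ b ∈ Finset.range (pbar + 1), σh b * eUh pbar vh σl b

/-- Weak payoff monotonicity for the low-valuation agent. -/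
def WPMl (pbar vl : ℕ) (σl σh : ℕ → ℝ) : Prop :=
  ∀ a ≤ pbar, ∀ b ≤ pbar, σl b < σl a → eUl pbar vl σh b < eUl pbar vl σh a

/-- Weak payoff monotonicity for the high-valuation agent. -/
def WPMh (pbar vh : ℕ) (σl σh : ℕ → ℝ) : Prop :=
  ∀ a ≤ pbar, ∀ b ≤ pbar, σh b < σh a → eUh pbar vh σl b < eUh pbar vh σl a

/-- Expected bid under a mixed strategy. -/
noncomputable def Ebid (pbar : ℕ) (σ : ℕ → ℝ) : ℝ :=
  ∑ b ∈ Finset.range (pbar + 1), σ b * b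

/-- Point mass at `p`. -/
noncomputable def deltaWB (p : ℕ) : ℕ → ℝ := fun b => if b = p then 1 else 0

lemma deltaWB_nonneg (p b : ℕ) : 0 ≤ deltaWB p b := by
  unfold deltaWB; split <;> norm_num

lemma deltaWB_mixed {pbar p : ℕ} (hp : p ≤ pbar) : IsMixed pbar (deltaWB p) := by
  refine ⟨deltaWB_nonneg p, fun b hb => ?_, ?_⟩
  · unfold deltaWB; rw [if_neg]; omega
  · unfold deltaWB
    rw [Finset.sum_ite_eq' (Finset.range (pbar + 1)) p (fun _ => (1 : ℝ))]
    rw [if_pos (Finset.mem_range.2 (Nat.lt_succ_of_le hp))]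

lemma eUl_deltaWB {pbar p : ℕ} (hp : p ≤ pbar) (vl b : ℕ) :
    eUl pbar vl (deltaWB p) b = UlWB vl b p := by
  unfold eUl deltaWB
  simp only [ite_mul, one_mul, zero_mul]
  rw [Finset.sum_ite_eq' (Finset.range (pbar + 1)) p (fun r => UlWB vl b r)]
  rw [if_pos (Finset.mem_range.2 (Nat.lt_succ_of_le hp))]

lemma eUh_deltaWB {pbar p : ℕ} (hp : p ≤ pbar) (vh b : ℕ) :
    eUh pbar vh (deltaWB p) b = UhWB vh b p := by
  unfold eUh deltaWB
  simp only [ite_mul, one_mul, zero_mul]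
  rw [Finset.sum_ite_eq' (Finset.range (pbar + 1)) p (fun r => UhWB vh b r)]
  rw [if_pos (Finset.mem_range.2 (Nat.lt_succ_of_le hp))]

lemma piL_deltaWB {pbar p : ℕ} (hp : p ≤ pbar) (vl : ℕ) (σh : ℕ → ℝ) :
    piL pbar vl (deltaWB p) σh = eUl pbar vl σh p := by
  unfold piL deltaWB
  simp only [ite_mul, one_mul, zero_mul]
  rw [Finset.sum_ite_eq' (Finset.range (pbar + 1)) p (fun b => eUl pbar vl σh b)]
  rw [if_pos (Finset.mem_range.2 (Nat.lt_succ_of_le hp))]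

lemma piH_deltaWB {pbar p : ℕ} (hp : p ≤ pbar) (vh : ℕ) (σl : ℕ → ℝ) :
    piH pbar vh σl (deltaWB p) = eUh pbar vh σl p := by
  unfold piH deltaWB
  simp only [ite_mul, one_mul, zero_mul]
  rw [Finset.sum_ite_eq' (Finset.range (pbar + 1)) p (fun b => eUh pbar vh σl b)]
  rw [if_pos (Finset.mem_range.2 (Nat.lt_succ_of_le hp))]

/-- The set of Nash equilibrium payoff vectors of the winner-bid auction is
`{(cl + t, ch + (ES - t)) : t = 0, ..., ES}` with `ES = ch - cl`. -/
theorem stmt1 (pbar vl vh cl ch : ℕ) (hvl : vl = 2 * cl) (hvh : vh = 2 * ch)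
    (hcl : 0 < cl) (hclch : cl < ch) (hpbar : ch ≤ pbar) :
    ∀ x y : ℝ,
      (∃ σl σh, IsNashWB pbar vl vh σl σh ∧
        piL pbar vl σl σh = x ∧ piH pbar vh σl σh = y) ↔
      (∃ t : ℕ, t ≤ ch - cl ∧ x = ((cl + t : ℕ) : ℝ) ∧
        y = ((ch + ((ch - cl) - t) : ℕ) : ℝ)) := by
  have hvlR : (vl : ℝ) = 2 * cl := by rw [hvl]; push_cast; ring
  have hvhR : (vh : ℝ) = 2 * ch := by rw [hvh]; push_cast; ring
  have hclchR : (cl : ℝ) < ch := by exact_mod_cast hclch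
  intro x y
  constructor
  · -- hard direction
    rintro ⟨σl, σh, ⟨hMl, hMh, hNl, hNh⟩, hpx, hpy⟩
    obtain ⟨hlpos, hl0, hlsum⟩ := hMl
    obtain ⟨hhpos, hh0, hhsum⟩ := hMh
    set R := Finset.range (pbar + 1) with hRdef
    -- supports nonempty
    have hSl : (R.filter (fun b => 0 < σl b)).Nonempty := by
      by_contra h
      rw [Finset.not_nonempty_iff_eq_empty] at h
      have hz : ∑ b ∈ R, σl b = 0 := Finset.sum_eq_zero (fun b hb => by
        by_contra hb0
        have hpos : 0 < σl b := lt_of_le_of_ne (hlpos b) (Ne.symm hb0)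
        have : b ∈ R.filter (fun b => 0 < σl b) := Finset.mem_filter.2 ⟨hb, hpos⟩
        rw [h] at this
        exact absurd this (Finset.notMem_empty b))
      rw [hlsum] at hz; norm_num at hz
    have hSh : (R.filter (fun b => 0 < σh b)).Nonempty := by
      by_contra h
      rw [Finset.not_nonempty_iff_eq_empty] at h
      have hz : ∑ b ∈ R, σh b = 0 := Finset.sum_eq_zero (fun b hb => by
        by_contra hb0
        have hpos : 0 < σh b := lt_of_le_of_ne (hhpos b) (Ne.symm hb0)
        have : b ∈ R.filter (fun b => 0 < σh b) := Finset.mem_filter.2 ⟨hb, hpos⟩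
        rw [h] at this
        exact absurd this (Finset.notMem_empty b))
      rw [hhsum] at hz; norm_num at hz
    set m := (R.filter (fun b => 0 < σl b)).max' hSl with hmdef
    set k := (R.filter (fun b => 0 < σh b)).min' hSh with hkdef
    have hmmem := (R.filter (fun b => 0 < σl b)).max'_mem hSl
    have hkmem := (R.filter (fun b => 0 < σh b)).min'_mem hSh
    have hmσ : 0 < σl m := (Finset.mem_filter.1 hmmem).2
    have hkσ : 0 < σh k := (Finset.mem_filter.1 hkmem).2
    have hmle : m ≤ pbar := Nat.lt_succ_iff.1 (Finset.mem_range.1 (Finset.mem_filter.1 hmmem).1)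
    have hkle : k ≤ pbar := Nat.lt_succ_iff.1 (Finset.mem_range.1 (Finset.mem_filter.1 hkmem).1)
    have hmax : ∀ b, 0 < σl b → b ≤ m := by
      intro b hb
      by_cases h : b ≤ pbar
      · exact Finset.le_max' _ b
          (Finset.mem_filter.2 ⟨Finset.mem_range.2 (Nat.lt_succ_of_le h), hb⟩)
      · exact absurd (hl0 b (by omega)) (ne_of_gt hb)
    have hkmin : ∀ r, 0 < σh r → k ≤ r := by
      intro r hr
      by_cases h : r ≤ pbar
      · exact Finset.min'_le _ r
          (Finset.mem_filter.2 ⟨Finset.mem_range.2 (Nat.lt_succ_of_le h), hr⟩)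
      · exact absurd (hh0 r (by omega)) (ne_of_gt hr)
    have hkmemR : k ∈ R := Finset.mem_range.2 (Nat.lt_succ_of_le hkle)
    have hmmemR : m ∈ R := Finset.mem_range.2 (Nat.lt_succ_of_le hmle)
    -- KEY LEMMA: m ≤ k (the low type never outbids the high type in equilibrium)
    have hmk : m ≤ k := by
      by_contra hmkc
      push_neg at hmkc  -- k < m
      have hm1 : 1 ≤ m := by omega
      have hm1R : ((m - 1 : ℕ) : ℝ) = (m : ℝ) - 1 := by
        push_cast [hm1]; ring
      -- Step A : m ≤ cl
      have hmcl : m ≤ cl := by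
        by_contra hc
        push_neg at hc  -- cl < m
        have hclm : (cl : ℝ) + 1 ≤ (m : ℝ) := by exact_mod_cast hc
        have h1 : eUl pbar vl σh m < eUl pbar vl σh (m - 1) := by
          unfold eUl
          apply Finset.sum_lt_sum
          · intro r _
            apply mul_le_mul_of_nonneg_left ?_ (hhpos r)
            unfold UlWB
            split_ifs with h1 h2 h2
            · rw [hm1R]; linarith
            · -- r < m, ¬ r < m - 1 ⇒ r = m - 1
              have hr : r = m - 1 := by omega
              subst hr
              rw [hm1R, hvlR]
              linarith
            · omega
            · exact le_refl _
          · refine ⟨k, hkmemR, ?_⟩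
            apply mul_lt_mul_of_pos_left ?_ hkσ
            unfold UlWB
            rw [if_pos hmkc]
            by_cases h2 : k < m - 1
            · rw [if_pos h2, hm1R]; linarith
            · have hk : k = m - 1 := by omega
              rw [if_neg h2, hk, hm1R, hvlR]
              linarith
        exact absurd (hNl m hmle hmσ (m - 1) (by omega)) (not_le.2 h1)
      have hmclR : (m : ℝ) ≤ cl := by exact_mod_cast hmcl
      -- Step B : l puts mass at or below k
      have hb0 : ∃ b0, b0 ≤ k ∧ 0 < σl b0 := by
        by_contra h
        push_neg at h
        have hz : ∀ b0, b0 ≤ k → σl b0 = 0 := fun b0 hb =>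
          le_antisymm (h b0 hb) (hlpos b0)
        have h1 : eUh pbar vh σl k < eUh pbar vh σl m := by
          unfold eUh
          apply Finset.sum_lt_sum
          · intro r _
            rcases eq_or_lt_of_le (hlpos r) with h0 | h0
            · rw [← h0]; simp
            · apply mul_le_mul_of_nonneg_left ?_ (hlpos r)
              have hrk : k < r := by
                by_contra hh
                push_neg at hh
                exact absurd (hz r hh) (ne_of_gt h0)
              have hrm : r ≤ m := hmax r h0
              unfold UhWB
              rw [if_neg (by omega), if_pos hrm, hvhR]
              have hrR : (r : ℝ) ≤ m := by exact_mod_cast hrm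
              linarith
          · refine ⟨m, hmmemR, ?_⟩
            apply mul_lt_mul_of_pos_left ?_ hmσ
            unfold UhWB
            rw [if_neg (by omega), if_pos (le_refl m), hvhR]
            linarith
        exact absurd (hNh k hkle hkσ m hmle) (not_le.2 h1)
      obtain ⟨b0, hb0k, hb0pos⟩ := hb0
      have hb0le : b0 ≤ pbar := le_trans hb0k hkle
      -- Step C : contradiction, l strictly prefers m to b0
      have h1 : eUl pbar vl σh b0 < eUl pbar vl σh m := by
        unfold eUl
        apply Finset.sum_lt_sum
        · intro r _
          rcases eq_or_lt_of_le (hhpos r) with h0 | h0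
          · rw [← h0]; simp
          · apply mul_le_mul_of_nonneg_left ?_ (hhpos r)
            have hkr : k ≤ r := hkmin r h0
            unfold UlWB
            rw [if_neg (by omega)]
            split_ifs with h2
            · rw [hvlR]
              have hrR : (r : ℝ) < m := by exact_mod_cast h2
              linarith
            · exact le_refl _
        · refine ⟨k, hkmemR, ?_⟩
          apply mul_lt_mul_of_pos_left ?_ hkσ
          unfold UlWB
          rw [if_neg (by omega), if_pos hmkc, hvlR]
          have hkR : (k : ℝ) < m := by exact_mod_cast hmkc
          linarith
      exact absurd (hNl b0 hb0le hb0pos m hmle) (not_le.2 h1)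
    -- h always wins at any bid b ≥ k
    have heUh : ∀ b, k ≤ b → eUh pbar vh σl b = (vh : ℝ) - b := by
      intro b hb
      unfold eUh
      have hcongr : ∀ r ∈ R, σl r * UhWB vh b r = σl r * ((vh : ℝ) - b) := by
        intro r _
        rcases eq_or_lt_of_le (hlpos r) with h0 | h0
        · rw [← h0]; ring
        · have hrb : r ≤ b := le_trans (le_trans (hmax r h0) hmk) hb
          unfold UhWB
          rw [if_pos hrb]
      rw [Finset.sum_congr rfl hcongr, ← Finset.sum_mul, hlsum, one_mul]
    -- σh is a point mass at k
    have hpure : ∀ b, b ≠ k → σh b = 0 := by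
      intro b hbk
      by_contra h
      have hb : 0 < σh b := lt_of_le_of_ne (hhpos b) (Ne.symm h)
      have hble : b ≤ pbar := by
        by_contra hh
        exact absurd (hh0 b (by omega)) (ne_of_gt hb)
      have h1 := hNh b hble hb k hkle
      have h2 := hNh k hkle hkσ b hble
      rw [heUh b (hkmin b hb), heUh k (le_refl k)] at h1 h2
      have : (b : ℝ) = k := by linarith
      exact hbk (by exact_mod_cast this)
    have hk1 : σh k = 1 := by
      have := Finset.sum_eq_single_of_mem k hkmemR
        (fun b _ hbk => hpure b hbk)
      rw [this] at hhsum
      exact hhsum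
    -- eUl against the point mass
    have heUl : ∀ b, eUl pbar vl σh b = UlWB vl b k := by
      intro b
      unfold eUl
      rw [Finset.sum_eq_single_of_mem k hkmemR
        (fun r _ hrk => by rw [hpure r hrk, zero_mul]), hk1, one_mul]
    -- payoffs
    have hpiL : piL pbar vl σl σh = (k : ℝ) := by
      unfold piL
      have hcongr : ∀ b ∈ R, σl b * eUl pbar vl σh b = σl b * (k : ℝ) := by
        intro b _
        rcases eq_or_lt_of_le (hlpos b) with h0 | h0
        · rw [← h0]; ring
        · rw [heUl b]
          unfold UlWB
          rw [if_neg (by have := le_trans (hmax b h0) hmk; omega)]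
      rw [Finset.sum_congr rfl hcongr, ← Finset.sum_mul, hlsum, one_mul]
    have hpiH : piH pbar vh σl σh = (vh : ℝ) - k := by
      unfold piH
      rw [Finset.sum_eq_single_of_mem k hkmemR
        (fun b _ hbk => by rw [hpure b hbk, zero_mul]), hk1, one_mul,
        heUh k (le_refl k)]
    -- bounds on k
    have hclk : cl ≤ k := by
      by_contra hc
      push_neg at hc  -- k < cl
      have h1 := hNl m hmle hmσ cl (by omega)
      rw [heUl m, heUl cl] at h1
      unfold UlWB at h1
      rw [if_neg (show ¬ k < m by omega), if_pos hc, hvlR] at h1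
      have hkR : (k : ℝ) < cl := by exact_mod_cast hc
      linarith
    have hkch : k ≤ ch := by
      have h1 := hNh k hkle hkσ ch (by omega)
      rw [heUh k (le_refl k)] at h1
      have h2 : (ch : ℝ) ≤ eUh pbar vh σl ch := by
        unfold eUh
        calc (ch : ℝ) = ∑ r ∈ R, σl r * (ch : ℝ) := by
              rw [← Finset.sum_mul, hlsum, one_mul]
          _ ≤ _ := by
              apply Finset.sum_le_sum
              intro r _
              apply mul_le_mul_of_nonneg_left ?_ (hlpos r)
              unfold UhWB
              split_ifs with h3
              · rw [hvhR]; linarith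
              · push_neg at h3
                exact_mod_cast h3.le
      rw [hvhR] at h1
      have : (k : ℝ) ≤ ch := by linarith
      exact_mod_cast this
    refine ⟨k - cl, by omega, ?_, ?_⟩
    · have h1 : cl + (k - cl) = k := by omega
      rw [h1, ← hpx, hpiL]
    · have h1 : ch + ((ch - cl) - (k - cl)) = 2 * ch - k := by omega
      rw [h1, ← hpy, hpiH, hvhR]
      have hk2ch : k ≤ 2 * ch := by omega
      push_cast [hk2ch]
      ring
  · -- easy direction : construct the pure equilibrium
    rintro ⟨t, ht, hx, hy⟩
    set p := cl + t with hpdef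
    have hpch : p ≤ ch := by omega
    have hppbar : p ≤ pbar := le_trans hpch hpbar
    have hclp : cl ≤ p := by omega
    have hclpR : (cl : ℝ) ≤ p := by exact_mod_cast hclp
    have hpchR : (p : ℝ) ≤ ch := by exact_mod_cast hpch
    refine ⟨deltaWB p, deltaWB p, ⟨deltaWB_mixed hppbar, deltaWB_mixed hppbar, ?_, ?_⟩, ?_, ?_⟩
    · intro b _ hb b' hb'
      have hbp : b = p := by
        by_contra h
        unfold deltaWB at hb
        rw [if_neg h] at hb
        norm_num at hb
      subst hbp
      rw [eUl_deltaWB hppbar, eUl_deltaWB hppbar]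
      unfold UlWB
      rw [if_neg (lt_irrefl p)]
      split_ifs with h
      · have hb'R : (p : ℝ) + 1 ≤ b' := by exact_mod_cast h
        rw [hvlR]
        linarith
      · exact le_refl _
    · intro b _ hb b' hb'
      have hbp : b = p := by
        by_contra h
        unfold deltaWB at hb
        rw [if_neg h] at hb
        norm_num at hb
      subst hbp
      rw [eUh_deltaWB hppbar, eUh_deltaWB hppbar]
      unfold UhWB
      rw [if_pos (le_refl p)]
      split_ifs with h
      · have hb'R : (p : ℝ) ≤ b' := by exact_mod_cast h
        linarith
      · rw [hvhR]
        linarith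
    · rw [piL_deltaWB hppbar, eUl_deltaWB hppbar]
      unfold UlWB
      rw [if_neg (lt_irrefl p), hx]
    · rw [piH_deltaWB hppbar, eUh_deltaWB hppbar]
      unfold UhWB
      rw [if_pos (le_refl p), hy, hvhR]
      have h1 : ch + ((ch - cl) - t) = 2 * ch - p := by omega
      rw [h1]
      have hp2ch : p ≤ 2 * ch := by omega
      push_cast [hp2ch]
      ring
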